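/- arXiv:1810.03130 — 2 statements merged into one kernel-verified Lean document; each statement's English description precedes it below -/
import Mathlib

section
/- For the Rodriguez parameterization, the norm of Υ_a(R) and the normalized Euclidean distance satisfy ‖Υ_a(R)‖² = 4‖ρ‖²/(1+‖ρ‖²)² = 4‖R‖_I(1 - ‖R‖_I), where R = R_ρ(ρ), Υ_a(R) = 2ρ/(1+‖ρ‖²), and ‖R‖_I = ‖ρ‖²/(1+‖ρ‖²). -/
open Matrix

noncomputable section

/-- The skew-symmetric matrix `[v]ₓ` of a vector `v ∈ ℝ³`. -/
def skew (v : Fin 3 → ℝ) : Matrix (Fin 3) (Fin 3) ℝ :=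
  !![0, -v 2, v 1; v 2, 0, -v 0; -v 1, v 0, 0]

/-- The Rodriguez map `ρ ↦ (1/(1+‖ρ‖²)) ((1-‖ρ‖²) I₃ + 2ρρᵀ + 2[ρ]ₓ)`. -/
def rod (ρ : EuclideanSpace ℝ (Fin 3)) : Matrix (Fin 3) (Fin 3) ℝ :=
  (1 / (1 + ‖ρ‖ ^ 2)) •
    ((1 - ‖ρ‖ ^ 2) • (1 : Matrix (Fin 3) (Fin 3) ℝ) +
      (2 : ℝ) • vecMulVec ρ ρ + (2 : ℝ) • skew ρ)


/-- For the Rodriguez parameterization, with `Υ_a(R) = 2ρ/(1+‖ρ‖²)` and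
`‖R‖_I = (1/4) Tr(I₃ - R)`, one has
`‖Υ_a(R)‖² = 4‖ρ‖²/(1+‖ρ‖²)² = 4‖R‖_I (1 - ‖R‖_I)`. -/
theorem norm_vex_sq (ρ : EuclideanSpace ℝ (Fin 3)) :
    ‖(2 / (1 + ‖ρ‖ ^ 2)) • ρ‖ ^ 2 = 4 * ‖ρ‖ ^ 2 / (1 + ‖ρ‖ ^ 2) ^ 2 ∧
    ‖(2 / (1 + ‖ρ‖ ^ 2)) • ρ‖ ^ 2 =
      4 * ((1 / 4 : ℝ) * Matrix.trace ((1 : Matrix (Fin 3) (Fin 3) ℝ) - rod ρ)) *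
        (1 - (1 / 4 : ℝ) * Matrix.trace ((1 : Matrix (Fin 3) (Fin 3) ℝ) - rod ρ)) := by
  have hn : (0 : ℝ) ≤ ‖ρ‖ ^ 2 := by positivity
  have hd : (1 : ℝ) + ‖ρ‖ ^ 2 ≠ 0 := by nlinarith
  have h1 : ‖(2 / (1 + ‖ρ‖ ^ 2)) • ρ‖ ^ 2 = 4 * ‖ρ‖ ^ 2 / (1 + ‖ρ‖ ^ 2) ^ 2 := by
    rw [norm_smul]
    rw [Real.norm_eq_abs, abs_of_nonneg (by positivity)]
    field_simp
    ring
  have hρ : ρ 0 ^ 2 + ρ 1 ^ 2 + ρ 2 ^ 2 = ‖ρ‖ ^ 2 := by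
    rw [EuclideanSpace.norm_eq]
    rw [Real.sq_sqrt (by positivity)]
    simp [Fin.sum_univ_three, sq]
  have htr : Matrix.trace ((1 : Matrix (Fin 3) (Fin 3) ℝ) - rod ρ) =
      4 * ‖ρ‖ ^ 2 / (1 + ‖ρ‖ ^ 2) := by
    simp only [Matrix.trace, Matrix.diag, rod, skew, vecMulVec, Fin.sum_univ_three,
      Matrix.sub_apply, Matrix.smul_apply, Matrix.add_apply, Matrix.one_apply_eq,
      Matrix.of_apply, Matrix.cons_val', Matrix.cons_val_zero, Matrix.cons_val_one,
      Matrix.head_cons, Matrix.head_fin_const, Matrix.empty_val',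
      Matrix.cons_val_fin_one, Matrix.cons_val_two, Matrix.tail_cons, smul_eq_mul]
    field_simp
    nlinarith [hρ]
  refine ⟨h1, ?_⟩
  rw [h1, htr]
  rw [div_eq_iff (by positivity)]
  field_simp
  ring
end
end

section
/- Let V(ρ̃) = (‖ρ̃‖²/(1+‖ρ̃‖²))² and g̃ = (1/2)(I₃ + [ρ̃]ₓ + ρ̃ρ̃ᵀ). Then for any symmetric matrix Q², (1/2)Tr(g̃ᵀ V_ρ̃ρ̃ g̃ Q²) = (1/(2(1+‖ρ̃‖²)³))·Tr((1+‖ρ̃‖²)‖ρ̃‖² Q² + (2 - ‖ρ̃‖² - 3‖ρ̃‖⁴) ρ̃ρ̃ᵀ Q²). -/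
open Matrix

noncomputable section

/-- `V(ρ̃) = (‖ρ̃‖²/(1+‖ρ̃‖²))²`. -/
def Vfun (ρ : EuclideanSpace ℝ (Fin 3)) : ℝ := (‖ρ‖ ^ 2 / (1 + ‖ρ‖ ^ 2)) ^ 2

/-- The Hessian matrix `V_ρ̃ρ̃` of second partial derivatives of `V`. -/
def hessV (ρ : EuclideanSpace ℝ (Fin 3)) : Matrix (Fin 3) (Fin 3) ℝ :=
  fun i j => fderiv ℝ (fun x : EuclideanSpace ℝ (Fin 3) =>
    fderiv ℝ Vfun x (EuclideanSpace.single j 1)) ρ (EuclideanSpace.single i 1)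

lemma VfunHasFDeriv (x : EuclideanSpace ℝ (Fin 3)) :
    HasFDerivAt Vfun ((4 * ‖x‖ ^ 2 / (1 + ‖x‖ ^ 2) ^ 3) • (innerSL ℝ x)) x := by
  have hpos : (0:ℝ) < 1 + ‖x‖ ^ 2 := by positivity
  have hn : HasFDerivAt (fun y : EuclideanSpace ℝ (Fin 3) => ‖y‖ ^ 2)
      ((2:ℕ) • innerSL ℝ x) x := (hasStrictFDerivAt_norm_sq x).hasFDerivAt
  have hf : HasDerivAt (fun t : ℝ => (t / (1 + t)) ^ 2)
      (2 * ‖x‖ ^ 2 / (1 + ‖x‖ ^ 2) ^ 3) (‖x‖ ^ 2) := by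
    have h : HasDerivAt (fun t : ℝ => (t / (1 + t)) ^ 2) _ (‖x‖ ^ 2) := ((hasDerivAt_id (‖x‖ ^ 2)).div
      ((hasDerivAt_const _ (1:ℝ)).add (hasDerivAt_id _)) (by positivity)).pow 2
    convert h using 1
    have hne : (1 + ‖x‖ ^ 2) ≠ 0 := ne_of_gt hpos
    simp only [id_eq, pow_one, one_mul, zero_add, mul_one, Nat.cast_ofNat, Pi.div_apply,
      Pi.add_apply]
    rw [show ((1:ℝ) + ‖x‖ ^ 2 - ‖x‖ ^ 2) = 1 by ring, show (2-1 : ℕ) = 1 by rfl, pow_one,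
      mul_one_div, mul_div_assoc, mul_div_assoc, div_div,
      show ((1:ℝ) + ‖x‖ ^ 2) * (1 + ‖x‖ ^ 2) ^ 2 = (1 + ‖x‖ ^ 2) ^ 3 by ring, ← mul_div_assoc]
  have h2 : HasFDerivAt ((fun t : ℝ => (t / (1 + t)) ^ 2) ∘
      (fun y : EuclideanSpace ℝ (Fin 3) => ‖y‖ ^ 2)) _ x := hf.comp_hasFDerivAt x hn
  have : Vfun = (fun t : ℝ => (t / (1 + t)) ^ 2) ∘ (fun y : EuclideanSpace ℝ (Fin 3) => ‖y‖ ^ 2) := by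
    funext y; simp [Vfun, Function.comp]
  rw [this]
  refine h2.congr_fderiv ?_
  ext v
  simp [smul_smul]
  ring

lemma fderiv_Vfun (x : EuclideanSpace ℝ (Fin 3)) (j : Fin 3) :
    fderiv ℝ Vfun x (EuclideanSpace.single j 1) = 4 * ‖x‖ ^ 2 / (1 + ‖x‖ ^ 2) ^ 3 * x j := by
  rw [(VfunHasFDeriv x).fderiv]
  simp [EuclideanSpace.inner_single_right]
lemma hessV_eq (ρ : EuclideanSpace ℝ (Fin 3)) :
    hessV ρ = (4 * ‖ρ‖ ^ 2 / (1 + ‖ρ‖ ^ 2) ^ 3) • (1 : Matrix (Fin 3) (Fin 3) ℝ)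
      + (8 * (1 - 2 * ‖ρ‖ ^ 2) / (1 + ‖ρ‖ ^ 2) ^ 4) • vecMulVec ρ ρ := by
  ext i j
  have hrw : (fun x : EuclideanSpace ℝ (Fin 3) => fderiv ℝ Vfun x (EuclideanSpace.single j 1))
      = fun x : EuclideanSpace ℝ (Fin 3) => 4 * ‖x‖ ^ 2 / (1 + ‖x‖ ^ 2) ^ 3 * x j :=
    funext fun x => fderiv_Vfun x j
  have hpos : (0:ℝ) < 1 + ‖ρ‖ ^ 2 := by positivity
  have hn : HasFDerivAt (fun y : EuclideanSpace ℝ (Fin 3) => ‖y‖ ^ 2)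
      ((2:ℕ) • innerSL ℝ ρ) ρ := (hasStrictFDerivAt_norm_sq ρ).hasFDerivAt
  have hg : HasDerivAt (fun t : ℝ => 4 * t / (1 + t) ^ 3)
      (4 * (1 - 2 * ‖ρ‖ ^ 2) / (1 + ‖ρ‖ ^ 2) ^ 4) (‖ρ‖ ^ 2) := by
    have h : HasDerivAt (fun t : ℝ => 4 * t / (1 + t) ^ 3) _ (‖ρ‖ ^ 2) :=
      ((hasDerivAt_const (‖ρ‖ ^ 2) (4:ℝ)).mul (hasDerivAt_id _)).div
      (((hasDerivAt_const _ (1:ℝ)).add (hasDerivAt_id _)).pow 3) (pow_ne_zero _ hpos.ne')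
    convert h using 1
    simp only [id_eq, one_mul, zero_add, mul_one, Pi.div_apply, Pi.add_apply, Pi.mul_apply,
      Pi.pow_apply]
    rw [div_eq_div_iff (by positivity) (by positivity)]
    norm_num
    ring
  have hc : HasFDerivAt (fun y : EuclideanSpace ℝ (Fin 3) => 4 * ‖y‖ ^ 2 / (1 + ‖y‖ ^ 2) ^ 3)
      ((4 * (1 - 2 * ‖ρ‖ ^ 2) / (1 + ‖ρ‖ ^ 2) ^ 4) • ((2:ℕ) • innerSL ℝ ρ)) ρ :=
    by have := hg.comp_hasFDerivAt ρ hn; exact this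
  have hd : HasFDerivAt (fun y : EuclideanSpace ℝ (Fin 3) => y j)
      (innerSL ℝ (EuclideanSpace.single j (1:ℝ))) ρ := by
    have : (fun y : EuclideanSpace ℝ (Fin 3) => y j)
        = fun y => (innerSL ℝ (EuclideanSpace.single j (1:ℝ))) y := by
      funext y; simp [EuclideanSpace.inner_single_left]
    rw [this]
    exact (innerSL ℝ (EuclideanSpace.single j (1:ℝ))).hasFDerivAt
  have hmul : HasFDerivAt (fun y : EuclideanSpace ℝ (Fin 3) => 4 * ‖y‖ ^ 2 / (1 + ‖y‖ ^ 2) ^ 3 * y j)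
      _ ρ := hc.mul hd
  show fderiv ℝ (fun x : EuclideanSpace ℝ (Fin 3) =>
    fderiv ℝ Vfun x (EuclideanSpace.single j 1)) ρ (EuclideanSpace.single i 1) = _
  rw [hrw, hmul.fderiv]
  simp only [ContinuousLinearMap.add_apply, ContinuousLinearMap.smul_apply, Matrix.add_apply,
    Matrix.smul_apply, Matrix.one_apply, Matrix.vecMulVec_apply, EuclideanSpace.inner_single_left,
    EuclideanSpace.inner_single_right, EuclideanSpace.single_apply, smul_eq_mul, _root_.map_one,
    RCLike.inner_apply, conj_trivial]
  by_cases hij : i = j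
  · subst hij; simp [EuclideanSpace.single_apply]
    rw [EuclideanSpace.inner_single_right, conj_trivial]
    ring
  · simp [hij, Ne.symm hij, EuclideanSpace.single_apply]
    simp only [PiLp.inner_apply]
    simp [EuclideanSpace.single_apply, hij, Ne.symm hij]
    ring
set_option maxHeartbeats 1000000 in
lemma key (ρ : EuclideanSpace ℝ (Fin 3)) (a b : ℝ)
    (hs : ‖ρ‖ ^ 2 = ρ 0 ^ 2 + ρ 1 ^ 2 + ρ 2 ^ 2) :
    (1 + skew ρ + vecMulVec ρ ρ)ᵀ *
        (a • (1 : Matrix (Fin 3) (Fin 3) ℝ) + b • vecMulVec ρ ρ) *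
        (1 + skew ρ + vecMulVec ρ ρ) =
      (a * (1 + ‖ρ‖ ^ 2)) • (1 + vecMulVec ρ ρ) + (b * (1 + ‖ρ‖ ^ 2) ^ 2) • vecMulVec ρ ρ := by
  have hT : (1 + skew ρ + vecMulVec ρ ρ)ᵀ
      = 1 + !![0, ρ 2, -ρ 1; -ρ 2, 0, ρ 0; ρ 1, -ρ 0, 0] + vecMulVec ρ ρ := by
    rw [Matrix.transpose_add, Matrix.transpose_add, Matrix.transpose_one]
    congr 1
    · congr 1
      ext i j
      fin_cases i <;> fin_cases j <;> simp [skew]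
    · ext i j
      simp [Matrix.vecMulVec_apply, mul_comm]
  rw [hT, hs]
  ext i j
  fin_cases i <;> fin_cases j <;>
    (simp [Matrix.mul_apply, Fin.sum_univ_three, skew, Matrix.vecMulVec_apply,
      Matrix.one_apply, Matrix.transpose_apply] <;> ring)

/-- For `g̃ = (1/2)(I₃ + [ρ̃]ₓ + ρ̃ρ̃ᵀ)` and any symmetric `Q²`:
`(1/2)Tr(g̃ᵀ V_ρ̃ρ̃ g̃ Q²) =
  (1/(2(1+‖ρ̃‖²)³)) Tr((1+‖ρ̃‖²)‖ρ̃‖² Q² + (2 - ‖ρ̃‖² - 3‖ρ̃‖⁴) ρ̃ρ̃ᵀ Q²)`. -/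
theorem trace_hessian_identity (ρ : EuclideanSpace ℝ (Fin 3))
    (Q : Matrix (Fin 3) (Fin 3) ℝ) (hQ : Qᵀ = Q) :
    (1 / 2 : ℝ) *
      Matrix.trace
        (((1 / 2 : ℝ) • ((1 : Matrix (Fin 3) (Fin 3) ℝ) + skew ρ + vecMulVec ρ ρ))ᵀ *
          hessV ρ *
          ((1 / 2 : ℝ) • ((1 : Matrix (Fin 3) (Fin 3) ℝ) + skew ρ + vecMulVec ρ ρ)) * Q) =
      (1 / (2 * (1 + ‖ρ‖ ^ 2) ^ 3)) *
        Matrix.trace (((1 + ‖ρ‖ ^ 2) * ‖ρ‖ ^ 2) • Q +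
          (2 - ‖ρ‖ ^ 2 - 3 * ‖ρ‖ ^ 4) • (vecMulVec ρ ρ * Q)) := by
  have hpos : (0:ℝ) < 1 + ‖ρ‖ ^ 2 := by positivity
  have hne : (1 + ‖ρ‖ ^ 2 : ℝ) ≠ 0 := ne_of_gt hpos
  have hs : ‖ρ‖ ^ 2 = ρ 0 ^ 2 + ρ 1 ^ 2 + ρ 2 ^ 2 := by
    rw [EuclideanSpace.norm_eq, Real.sq_sqrt (by positivity)]
    simp [Fin.sum_univ_three]
  rw [hessV_eq, Matrix.transpose_smul, Matrix.smul_mul, Matrix.smul_mul, Matrix.mul_smul,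
    Matrix.smul_mul, Matrix.smul_mul, Matrix.trace_smul, Matrix.trace_smul,
    key ρ _ _ hs]
  simp only [Matrix.add_mul, Matrix.smul_mul, Matrix.one_mul, Matrix.trace_add,
    Matrix.trace_smul, smul_eq_mul]
  have h4 : ‖ρ‖ ^ 4 = (‖ρ‖ ^ 2) ^ 2 := by ring
  rw [h4]
  field_simp
  ring
end
end
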